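/- Sequences of sets with uniform density estimates converge in the local Hausdorff sense: let (E_n) be measurable subsets of ℝ^d such that for some γ > 0, ρ₀ > 0 and all n, every ball B_ρ(x) with ρ ≤ ρ₀ satisfies: |B_ρ(x) ∩ E_n| < γ|B_ρ(x)| implies |B_{ρ/2}(x) ∩ E_n| = 0, and symmetrically for the complement. If χ_{E_n} → χ_E in L¹_loc, then (after modifying E_n and E on null sets so that E_n^{(1)} and E^{(1)} are open) the sets E_n converge to E locally in the Hausdorff distance. -/
import Mathlib

open MeasureTheory Metric Filter Set Topology

/-- The set of points of Lebesgue density 1 of a set A ⊆ ℝ^d. -/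
def densityOnePoints {d : ℕ} (A : Set (EuclideanSpace ℝ (Fin d))) :
    Set (EuclideanSpace ℝ (Fin d)) :=
  {x | Tendsto (fun ρ => volume (A ∩ ball x ρ) / volume (ball x ρ))
        (nhdsWithin 0 (Set.Ioi 0)) (nhds 1)}

lemma aux_inter_ball_eq_closedBall {d : ℕ} (A : Set (EuclideanSpace ℝ (Fin d)))
    (x : EuclideanSpace ℝ (Fin d)) {r : ℝ} (hr : r ≠ 0) :
    volume (A ∩ ball x r) = volume (A ∩ closedBall x r) := by
  apply le_antisymm (measure_mono (inter_subset_inter_right _ ball_subset_closedBall))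
  calc volume (A ∩ closedBall x r) ≤ volume ((A ∩ ball x r) ∪ sphere x r) := by
        apply measure_mono
        rintro y ⟨hyA, hyc⟩
        rcases eq_or_lt_of_le (mem_closedBall.1 hyc) with h | h
        · exact Or.inr h
        · exact Or.inl ⟨hyA, h⟩
    _ ≤ volume (A ∩ ball x r) + volume (sphere x r) := measure_union_le _ _
    _ = volume (A ∩ ball x r) := by
        rw [Measure.addHaar_sphere_of_ne_zero volume x hr, add_zero]

lemma aux_ae_density {d : ℕ} {A : Set (EuclideanSpace ℝ (Fin d))} (hA : MeasurableSet A) :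
    volume (A \ densityOnePoints A) = 0 := by
  have h := Besicovitch.ae_tendsto_measure_inter_div_of_measurableSet (volume
    (α := EuclideanSpace ℝ (Fin d))) hA
  have h2 : ∀ᵐ x : EuclideanSpace ℝ (Fin d), x ∈ A → x ∈ densityOnePoints A := by
    filter_upwards [h] with x hx hxA
    have hx1 : Tendsto (fun r => volume (A ∩ closedBall x r) / volume (closedBall x r))
        (𝓝[>] 0) (𝓝 1) := by
      simpa [Set.indicator_of_mem hxA] using hx
    refine hx1.congr' ?_
    filter_upwards [self_mem_nhdsWithin] with r hr
    have hr' : (r : ℝ) ≠ 0 := ne_of_gt hr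
    have e1 := aux_inter_ball_eq_closedBall A x hr'
    have e2 := aux_inter_ball_eq_closedBall Set.univ x hr'
    rw [univ_inter, univ_inter] at e2
    rw [← e1, ← e2]
  rw [ae_iff] at h2
  refine measure_mono_null (fun y hy => ?_) h2
  simp only [mem_setOf_eq, Classical.not_imp]
  exact ⟨hy.1, hy.2⟩

lemma aux_pos_of_density {d : ℕ} {A : Set (EuclideanSpace ℝ (Fin d))}
    {x : EuclideanSpace ℝ (Fin d)} (hx : x ∈ densityOnePoints A) {r : ℝ} (hr : 0 < r) :
    0 < volume (A ∩ ball x r) := by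
  by_contra h
  push_neg at h
  have hz : volume (A ∩ ball x r) = 0 := le_antisymm h bot_le
  have hx' : Tendsto (fun _ : ℝ => (0 : ENNReal)) (𝓝[>] (0:ℝ)) (𝓝 1) := by
    refine (hx : Tendsto _ _ _).congr' ?_
    filter_upwards [Ioo_mem_nhdsGT_of_mem ⟨le_rfl, hr⟩] with ρ hρ
    have : volume (A ∩ ball x ρ) = 0 :=
      le_antisymm (le_trans (measure_mono (inter_subset_inter_right _
        (ball_subset_ball hρ.2.le))) hz.le) bot_le
    simp [this]
  have h10 := tendsto_nhds_unique hx' tendsto_const_nhds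
  exact (one_ne_zero : (1 : ENNReal) ≠ 0) h10

/-- Sets satisfying uniform density estimates which converge in L¹_loc converge
locally in the Hausdorff sense (for their density-one representatives). -/
theorem hausdorff_convergence_from_density {d : ℕ}
    (Eseq : ℕ → Set (EuclideanSpace ℝ (Fin d))) (E : Set (EuclideanSpace ℝ (Fin d)))
    (hEseqmeas : ∀ n, MeasurableSet (Eseq n)) (hEmeas : MeasurableSet E)
    (γ ρ₀ : ℝ) (hγ : 0 < γ) (hρ₀ : 0 < ρ₀)
    (hdens : ∀ n x ρ, 0 < ρ → ρ ≤ ρ₀ →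
      volume (ball x ρ ∩ Eseq n) < ENNReal.ofReal γ * volume (ball x ρ) →
      volume (ball x (ρ / 2) ∩ Eseq n) = 0)
    (hdensc : ∀ n x ρ, 0 < ρ → ρ ≤ ρ₀ →
      volume (ball x ρ ∩ (Eseq n)ᶜ) < ENNReal.ofReal γ * volume (ball x ρ) →
      volume (ball x (ρ / 2) ∩ (Eseq n)ᶜ) = 0)
    (hL1 : ∀ K : Set (EuclideanSpace ℝ (Fin d)), IsCompact K →
      Tendsto (fun n => volume (K ∩ (symmDiff (Eseq n) E))) atTop (nhds 0)) :
    ∀ K : Set (EuclideanSpace ℝ (Fin d)), IsCompact K → ∀ ε : ℝ, 0 < ε →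
      ∀ᶠ n in atTop,
        densityOnePoints (Eseq n) ∩ K ⊆ Metric.thickening ε (densityOnePoints E) ∧
        densityOnePoints E ∩ K ⊆ Metric.thickening ε (densityOnePoints (Eseq n)) := by
  intro K hK ε hε
  set ρ : ℝ := min ε ρ₀ with hρdef
  have hρpos : 0 < ρ := lt_min hε hρ₀
  have hρε : ρ ≤ ε := min_le_left _ _
  have hρρ₀ : ρ ≤ ρ₀ := min_le_right _ _
  set K' := cthickening ε K with hK'def
  have hK'c : IsCompact K' := hK.cthickening
  have hKsub : ∀ x ∈ K, ball x ε ⊆ K' := fun x hx =>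
    (ball_subset_thickening hx ε).trans (thickening_subset_cthickening ε K)
  set c1 := ENNReal.ofReal γ * volume (ball (0 : EuclideanSpace ℝ (Fin d)) ρ) with hc1def
  have hc1pos : 0 < c1 :=
    ENNReal.mul_pos (ENNReal.ofReal_pos.2 hγ).ne' (measure_ball_pos volume _ hρpos).ne'
  obtain ⟨t, htK, htfin, htcover⟩ := hK.finite_cover_balls (by positivity : (0:ℝ) < ε/4)
  have h1 : ∀ᶠ n in atTop, volume (K' ∩ symmDiff (Eseq n) E) < c1 :=
    (hL1 K' hK'c).eventually_lt_const hc1pos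
  have h2 : ∀ᶠ n in atTop, ∀ i ∈ t, 0 < volume (E ∩ ball i (ε/2)) →
      volume (K' ∩ symmDiff (Eseq n) E) < volume (E ∩ ball i (ε/2)) := by
    rw [eventually_all_finite htfin]
    intro i hi
    by_cases hpos : 0 < volume (E ∩ ball i (ε/2))
    · filter_upwards [(hL1 K' hK'c).eventually_lt_const hpos] with n hn _
      exact hn
    · filter_upwards with n hn
      exact absurd hn hpos
  filter_upwards [h1, h2] with n hn1 hn2
  constructor
  · rintro x ⟨hxd, hxK⟩
    by_contra hxt
    rw [mem_thickening_iff] at hxt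
    push_neg at hxt
    have hE0 : volume (E ∩ ball x ρ) = 0 := by
      refine measure_mono_null ?_ (aux_ae_density hEmeas)
      rintro y ⟨hyE, hyb⟩
      exact ⟨hyE, fun hyd =>
        absurd ((mem_ball'.1 hyb).trans_le hρε) (not_lt.2 (hxt y hyd))⟩
    have hEn : ENNReal.ofReal γ * volume (ball x ρ) ≤ volume (ball x ρ ∩ Eseq n) := by
      by_contra hlt
      push_neg at hlt
      have h0 := hdens n x ρ hρpos hρρ₀ hlt
      rw [inter_comm] at h0
      exact (aux_pos_of_density hxd (by positivity : (0:ℝ) < ρ/2)).ne' h0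
    have hsub : ball x ρ ∩ Eseq n ⊆ (K' ∩ symmDiff (Eseq n) E) ∪ (E ∩ ball x ρ) := by
      rintro y ⟨hyb, hyn⟩
      by_cases hyE : y ∈ E
      · exact Or.inr ⟨hyE, hyb⟩
      · exact Or.inl ⟨hKsub x hxK (ball_subset_ball hρε hyb),
          Set.mem_symmDiff.2 (Or.inl ⟨hyn, hyE⟩)⟩
    have hle : c1 ≤ volume (K' ∩ symmDiff (Eseq n) E) := by
      calc c1 = ENNReal.ofReal γ * volume (ball x ρ) := by
            rw [hc1def, Measure.addHaar_ball_center volume x]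
        _ ≤ volume (ball x ρ ∩ Eseq n) := hEn
        _ ≤ volume ((K' ∩ symmDiff (Eseq n) E) ∪ (E ∩ ball x ρ)) := measure_mono hsub
        _ ≤ volume (K' ∩ symmDiff (Eseq n) E) + volume (E ∩ ball x ρ) := measure_union_le _ _
        _ = volume (K' ∩ symmDiff (Eseq n) E) := by rw [hE0, add_zero]
    exact absurd hn1 (not_lt.2 hle)
  · rintro x ⟨hxd, hxK⟩
    obtain ⟨i, hit, hxi⟩ : ∃ i ∈ t, x ∈ ball i (ε/4) := by
      simpa using htcover hxK
    have hxi' : dist x i < ε/4 := mem_ball.1 hxi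
    have hball1 : ball x (ε/4) ⊆ ball i (ε/2) := by
      intro y hy
      have : dist y i ≤ dist y x + dist x i := dist_triangle _ _ _
      have hy' : dist y x < ε/4 := mem_ball.1 hy
      exact mem_ball.2 (by linarith)
    have hmi : 0 < volume (E ∩ ball i (ε/2)) :=
      lt_of_lt_of_le (aux_pos_of_density hxd (by positivity : (0:ℝ) < ε/4))
        (measure_mono (inter_subset_inter_right _ hball1))
    by_contra hxt
    rw [mem_thickening_iff] at hxt
    push_neg at hxt
    have hn0 : volume (Eseq n ∩ ball x ε) = 0 := by
      refine measure_mono_null ?_ (aux_ae_density (hEseqmeas n))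
      rintro y ⟨hyn, hyb⟩
      exact ⟨hyn, fun hyd => absurd (mem_ball'.1 hyb) (not_lt.2 (hxt y hyd))⟩
    have hball2 : ball i (ε/2) ⊆ ball x ε := by
      intro y hy
      have : dist y x ≤ dist y i + dist i x := dist_triangle _ _ _
      have hy' : dist y i < ε/2 := mem_ball.1 hy
      have hix : dist i x < ε/4 := by rwa [dist_comm] at hxi'
      exact mem_ball.2 (by linarith)
    have hsub : E ∩ ball i (ε/2) ⊆ (K' ∩ symmDiff (Eseq n) E) ∪ (Eseq n ∩ ball x ε) := by
      rintro y ⟨hyE, hyb⟩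
      by_cases hyn : y ∈ Eseq n
      · exact Or.inr ⟨hyn, hball2 hyb⟩
      · exact Or.inl ⟨hKsub x hxK (hball2 hyb),
          Set.mem_symmDiff.2 (Or.inr ⟨hyE, hyn⟩)⟩
    have hle : volume (E ∩ ball i (ε/2)) ≤ volume (K' ∩ symmDiff (Eseq n) E) := by
      calc volume (E ∩ ball i (ε/2))
          ≤ volume ((K' ∩ symmDiff (Eseq n) E) ∪ (Eseq n ∩ ball x ε)) := measure_mono hsub
        _ ≤ volume (K' ∩ symmDiff (Eseq n) E) + volume (Eseq n ∩ ball x ε) :=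
            measure_union_le _ _
        _ = volume (K' ∩ symmDiff (Eseq n) E) := by rw [hn0, add_zero]
    exact absurd (hn2 i hit hmi) (not_lt.2 hle)
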